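/- Let (A, Ã) be a dual pair of closed densely defined operators on a complex Hilbert space H with the common core property (common core D), with A dissipative, and let V := ((A − Ã)/(2i))↾_D be its imaginary part (a non-negative symmetric operator). Let W_F = V_F^{1/2} and W_K = V_K^{1/2} be the square roots of the Friedrichs and Kreĭn–von Neumann extensions of V, and let U be the bounded operator with U(W_F h) = W_K h for all h ∈ D(W_F), isometric on the closure of ran(W_F) and vanishing on its orthogonal complement. Let 𝒱 ⊆ D(Ã*) be a subspace with 𝒱 ∩ D(A) = {0} and let L : 𝒱 → H be linear. Assume that for every v ∈ 𝒱 one has v ∈ D(W_K) and Lv = W_F φ_v for some (necessarily unique) φ_v ∈ D(W_F) ∩ closure(ran(W_F)). Then the extension A_{𝒱,L} (with domain D(A) ∔ 𝒱, acting as f + v ↦ Ã*(f+v) + Lv) is dissipative, i.e., Im⟨f+v, Ã*(f+v) + Lv⟩ ≥ 0 for all f ∈ D(A) and v ∈ 𝒱, if and only if for every v ∈ 𝒱: Im⟨v, Ã*v + Lv⟩ ≥ (1/4)‖U φ_v + 2i W_K v‖². -/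

import Mathlib

noncomputable section

open Complex

variable {H : Type*} [NormedAddCommGroup H] [InnerProductSpace ℂ H] [CompleteSpace H]

local notation "⟪" x ", " y "⟫" => @inner ℂ _ _ x y

/-- A partially defined operator is *dissipative* if `Im ⟪ψ, A ψ⟫ ≥ 0` for all `ψ` in its
domain. -/
def Dissipative (A : H →ₗ.[ℂ] H) : Prop :=
  ∀ ψ : A.domain, 0 ≤ (⟪(ψ : H), A ψ⟫).im

/-- A partially defined operator is *symmetric* if `⟪f, S g⟫ = ⟪S f, g⟫` on its domain. -/
def IsSymmetricP (S : H →ₗ.[ℂ] H) : Prop :=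
  ∀ f g : S.domain, ⟪(f : H), S g⟫ = ⟪S f, (g : H)⟫

/-- A partially defined operator is *non-negative* if `⟪f, V f⟫` is real and `≥ 0` on its
domain. -/
def NonnegP (V : H →ₗ.[ℂ] H) : Prop :=
  ∀ f : V.domain, (⟪(f : H), V f⟫).im = 0 ∧ 0 ≤ (⟪(f : H), V f⟫).re

/-- `T = W ∘ W` as partially defined operators: the domain of `T` is
`{x ∈ D(W) : W x ∈ D(W)}` and there `T x = W (W x)`. -/
def IsSqrtOf (W T : H →ₗ.[ℂ] H) : Prop :=
  (∀ x : H, x ∈ T.domain ↔ ∃ hx : x ∈ W.domain, W ⟨x, hx⟩ ∈ W.domain) ∧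
  ∀ (x : H) (hxT : x ∈ T.domain) (hxW : x ∈ W.domain) (hWx : W ⟨x, hxW⟩ ∈ W.domain),
    T ⟨x, hxT⟩ = W ⟨W ⟨x, hxW⟩, hWx⟩

/-- The Ando–Nishio supremum `sup { |⟪h, V f⟫|² / ⟪f, V f⟫ : f ∈ D(V), V f ≠ 0 }`,
computed in `[0, ∞]`. -/
def anSup (V : H →ₗ.[ℂ] H) (h : H) : ENNReal :=
  ⨆ f : {f : V.domain // V f ≠ 0},
    ENNReal.ofReal (‖⟪h, V f.1⟫‖ ^ 2) / ENNReal.ofReal ((⟪(f.1 : H), V f.1⟫).re)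

/-- `W` is the square root of the Friedrichs extension of `V`: `W` is a non-negative
selfadjoint operator, `W ∘ W` is a non-negative selfadjoint extension of `V`, and `D(V)` is a
core for `W`. -/
def IsFriedrichsSqrt (V W : H →ₗ.[ℂ] H) : Prop :=
  IsSelfAdjoint W ∧ NonnegP W ∧
    (∃ T : H →ₗ.[ℂ] H, IsSqrtOf W T ∧ IsSelfAdjoint T ∧ NonnegP T ∧ V ≤ T) ∧
    (W.domRestrict V.domain).closure = W

/-- `W` is the square root of the Kreĭn–von Neumann extension of `V` (Ando–Nishio
characterization): `W` is a non-negative selfadjoint operator, `W ∘ W` is a non-negative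
selfadjoint extension of `V`, the domain of `W` consists exactly of those `h` with
`anSup V h < ∞`, and `‖W h‖² = anSup V h` there. -/
def IsKreinSqrt (V W : H →ₗ.[ℂ] H) : Prop :=
  IsSelfAdjoint W ∧ NonnegP W ∧
    (∃ T : H →ₗ.[ℂ] H, IsSqrtOf W T ∧ IsSelfAdjoint T ∧ NonnegP T ∧ V ≤ T) ∧
    (∀ h : H, h ∈ W.domain ↔ anSup V h < ⊤) ∧
    ∀ (h : H) (hh : h ∈ W.domain), ENNReal.ofReal (‖W ⟨h, hh⟩‖ ^ 2) = anSup V h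


section St7Aux

lemma st7_reInner_self (x : H) : (⟪x, x⟫).re = ‖x‖^2 := by
  rw [inner_self_eq_norm_sq_to_K]; simp [← Complex.ofReal_pow]

lemma st7_selfadj_symm {W : H →ₗ.[ℂ] H} (hW : IsSelfAdjoint W) :
    ∀ x y : W.domain, ⟪W x, (y:H)⟫ = ⟪(x:H), W y⟫ := by
  have fa := LinearPMap.adjoint_isFormalAdjoint (hW.dense_domain)
  rwa [LinearPMap.isSelfAdjoint_def.mp hW] at fa

lemma st7_mem_closure_graph_of_core {T : H →ₗ.[ℂ] H} {S : Submodule ℂ H}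
    (h : (T.domRestrict S).closure = T) (x : T.domain) :
    ((x : H), T x) ∈ closure ((T.domRestrict S).graph : Set (H × H)) := by
  by_cases hc : (T.domRestrict S).IsClosable
  · have h2 := hc.graph_closure_eq_closure_graph
    rw [h] at h2
    have hx : ((x:H), T x) ∈ T.graph := T.mem_graph x
    rw [← h2, ← Submodule.topologicalClosure_coe] at *
    exact hx
  · rw [LinearPMap.closure_def' hc] at h
    exact subset_closure (by rw [h]; exact T.mem_graph x)

lemma st7_apply_mem_closure_range_of_core {T : H →ₗ.[ℂ] H} {S : Submodule ℂ H}
    (h : (T.domRestrict S).closure = T) (x : T.domain) :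
    T x ∈ closure (Set.range fun y : (T.domRestrict S).domain => T.domRestrict S y) := by
  have hx := st7_mem_closure_graph_of_core h x
  have hsub : Prod.snd '' ((T.domRestrict S).graph : Set (H×H)) ⊆
      Set.range fun y : (T.domRestrict S).domain => T.domRestrict S y := by
    rintro _ ⟨p, hp, rfl⟩
    rcases (T.domRestrict S).mem_graph_iff'.mp hp with ⟨y, rfl⟩
    exact ⟨y, rfl⟩
  exact closure_mono hsub (image_closure_subset_closure_image continuous_snd ⟨_, hx, rfl⟩)

lemma st7_U_norm_le (U : H →L[ℂ] H) (M : Submodule ℂ H) (hM : IsClosed (M : Set H))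
    (h2 : ∀ x ∈ M, ‖U x‖ = ‖x‖) (h3 : ∀ x ∈ Mᗮ, U x = 0) : ∀ z, ‖U z‖ ≤ ‖z‖ := by
  intro z
  haveI : CompleteSpace M := hM.completeSpace_coe
  have hdec : U z = U (Submodule.orthogonalProjectionOnto M z) := by
    have h0 : U (z - Submodule.orthogonalProjectionOnto M z) = 0 :=
      h3 _ (Submodule.sub_starProjection_mem_orthogonal (K := M) z)
    have := map_sub U z (Submodule.orthogonalProjectionOnto M z : H)
    rw [h0] at this
    linear_combination (norm := module) -this
  rw [hdec, h2 _ (Submodule.orthogonalProjectionOnto M z).2]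
  calc ‖(Submodule.orthogonalProjectionOnto M z : H)‖ ≤ ‖Submodule.orthogonalProjectionOnto M‖ * ‖z‖ :=
        (Submodule.orthogonalProjectionOnto M).le_opNorm z
    _ ≤ 1 * ‖z‖ :=
        mul_le_mul_of_nonneg_right (Submodule.orthogonalProjectionOnto_norm_le M) (norm_nonneg z)
    _ = ‖z‖ := one_mul _

lemma st7_Ustar_norm_le (U : H →L[ℂ] H) (hU : ∀ z, ‖U z‖ ≤ ‖z‖) :
    ∀ y, ‖(ContinuousLinearMap.adjoint U) y‖ ≤ ‖y‖ := by
  intro y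
  set w := (ContinuousLinearMap.adjoint U) y with hw
  by_cases h0 : ‖w‖ = 0
  · rw [h0]; exact norm_nonneg y
  · have h1 : ‖w‖^2 = (⟪w, w⟫).re := (st7_reInner_self w).symm
    have h2 : ⟪w, w⟫ = ⟪y, U w⟫ := by
      rw [hw, ContinuousLinearMap.adjoint_inner_left]
    have h3 : (⟪y, U w⟫).re ≤ ‖y‖ * ‖U w‖ := by
      calc (⟪y, U w⟫).re ≤ ‖⟪y, U w⟫‖ := Complex.re_le_norm _
        _ ≤ ‖y‖ * ‖U w‖ := norm_inner_le_norm _ _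
    have h4 : ‖w‖^2 ≤ ‖y‖ * ‖w‖ := by
      rw [h1, h2]
      exact h3.trans (mul_le_mul_of_nonneg_left (hU w) (norm_nonneg y))
    have hpos : 0 < ‖w‖ := lt_of_le_of_ne (norm_nonneg w) (Ne.symm h0)
    nlinarith

lemma st7_UstarU (U : H →L[ℂ] H) (M : Submodule ℂ H) (hM : IsClosed (M : Set H))
    (h2 : ∀ x ∈ M, ‖U x‖ = ‖x‖) (h3 : ∀ x ∈ Mᗮ, U x = 0) :
    ∀ x ∈ M, (ContinuousLinearMap.adjoint U) (U x) = x := by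
  intro x hx
  set w := (ContinuousLinearMap.adjoint U) (U x) with hw
  have hUle := st7_U_norm_le U M hM h2 h3
  have hwle : ‖w‖ ≤ ‖x‖ := by
    rw [hw]
    exact (st7_Ustar_norm_le U hUle (U x)).trans (by rw [h2 x hx])
  have hiw : (⟪w, x⟫).re = ‖x‖^2 := by
    rw [hw, ContinuousLinearMap.adjoint_inner_left, @inner_self_eq_norm_sq_to_K ℂ, h2 x hx]
    simp [← Complex.ofReal_pow]
  have hexp : ‖w - x‖^2 = ‖w‖^2 - 2*(⟪w, x⟫).re + ‖x‖^2 := by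
    have := @norm_sub_sq ℂ _ _ _ _ w x
    simpa using this
  have hle0 : ‖w - x‖^2 ≤ 0 := by
    rw [hexp, hiw]
    nlinarith [norm_nonneg w, norm_nonneg x]
  have hn0 : ‖w - x‖ = 0 := by nlinarith [norm_nonneg (w - x)]
  have := norm_eq_zero.mp hn0
  linear_combination (norm := module) this

lemma st7_Ustar_mem (U : H →L[ℂ] H) (M : Submodule ℂ H) (hM : IsClosed (M : Set H))
    (h3 : ∀ x ∈ Mᗮ, U x = 0) :
    ∀ y, (ContinuousLinearMap.adjoint U) y ∈ M := by
  intro y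
  have hmem : (ContinuousLinearMap.adjoint U) y ∈ Mᗮᗮ := by
    intro z hz
    rw [ContinuousLinearMap.adjoint_inner_right, h3 z hz, inner_zero_left]
  rwa [Submodule.orthogonal_orthogonal_eq_closure,
    hM.submodule_topologicalClosure_eq] at hmem

lemma st7_sqrt_dom {V W : H →ₗ.[ℂ] H}
    (hT : ∃ T : H →ₗ.[ℂ] H, IsSqrtOf W T ∧ IsSelfAdjoint T ∧ NonnegP T ∧ V ≤ T) :
    V.domain ≤ W.domain := by
  obtain ⟨T, hsq, -, -, hVT⟩ := hT
  intro x hx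
  obtain ⟨h, -⟩ := (hsq.1 x).mp (hVT.1 hx)
  exact h

lemma st7_sqrt_inner {V W : H →ₗ.[ℂ] H} (hW : IsSelfAdjoint W)
    (hT : ∃ T : H →ₗ.[ℂ] H, IsSqrtOf W T ∧ IsSelfAdjoint T ∧ NonnegP T ∧ V ≤ T)
    (x : V.domain) (hx : (x:H) ∈ W.domain) (y : W.domain) :
    ⟪(y:H), V x⟫ = ⟪W y, W ⟨(x:H), hx⟩⟫ := by
  obtain ⟨T, hsq, -, -, hVT⟩ := hT
  obtain ⟨hxW, hWx⟩ := (hsq.1 x).mp (hVT.1 x.2)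
  have h1 : V x = T ⟨(x:H), hVT.1 x.2⟩ := hVT.2 rfl
  have h2 : T ⟨(x:H), hVT.1 x.2⟩ = W ⟨W ⟨(x:H), hxW⟩, hWx⟩ := hsq.2 x _ hxW hWx
  rw [h1, h2]
  exact (st7_selfadj_symm hW y ⟨W ⟨(x:H), hxW⟩, hWx⟩).symm

lemma st7_krein_mem {V WK : H →ₗ.[ℂ] H} (hWK : IsKreinSqrt V WK)
    (hd : V.domain ≤ WK.domain) (v : H) (hv : v ∈ WK.domain) :
    WK ⟨v, hv⟩ ∈ closure (Set.range fun f : V.domain => WK ⟨(f:H), hd f.2⟩) := by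
  set KD : V.domain →ₗ[ℂ] H := WK.toFun.comp (Submodule.inclusion hd) with hKD
  have hrange : (Set.range fun f : V.domain => WK ⟨(f:H), hd f.2⟩)
      = ↑(LinearMap.range KD) := by
    rw [LinearMap.coe_range]; rfl
  set NS := (LinearMap.range KD).topologicalClosure with hNS
  haveI : CompleteSpace NS := (Submodule.isClosed_topologicalClosure _).completeSpace_coe
  set k : H := WK ⟨v, hv⟩ with hk
  set P : H := (Submodule.orthogonalProjectionOnto NS k : H) with hP
  have hyP : k - P ∈ NSᗮ := Submodule.sub_starProjection_mem_orthogonal (K := NS) k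
  have hPm : P ∈ NS := (Submodule.orthogonalProjectionOnto NS k).2
  have hVinner : ∀ f : V.domain, ⟪v, V f⟫ = ⟪k, WK ⟨(f:H), hd f.2⟩⟫ :=
    fun f => st7_sqrt_inner hWK.1 hWK.2.2.1 f (hd f.2) ⟨v, hv⟩
  have hmemNS : ∀ f : V.domain, WK ⟨(f:H), hd f.2⟩ ∈ NS :=
    fun f => Submodule.le_topologicalClosure _ ⟨f, rfl⟩
  have hky : ∀ f : V.domain, ⟪k, WK ⟨(f:H), hd f.2⟩⟫ = ⟪P, WK ⟨(f:H), hd f.2⟩⟫ := by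
    intro f
    have h0 : ⟪k - P, WK ⟨(f:H), hd f.2⟩⟫ = 0 :=
      (Submodule.mem_orthogonal' NS _).mp hyP _ (hmemNS f)
    rw [inner_sub_left] at h0
    exact sub_eq_zero.mp h0
  have hre : ∀ f : V.domain, (⟪(f:H), V f⟫).re = ‖WK ⟨(f:H), hd f.2⟩‖^2 := by
    intro f
    rw [st7_sqrt_inner hWK.1 hWK.2.2.1 f (hd f.2) ⟨(f:H), hd f.2⟩]
    exact st7_reInner_self _
  have hsup : anSup V v ≤ ENNReal.ofReal (‖P‖^2) := by
    apply iSup_le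
    rintro ⟨f, -⟩
    have hb : ‖⟪v, V f⟫‖ ≤ ‖P‖ * ‖WK ⟨(f:H), hd f.2⟩‖ := by
      rw [hVinner f, hky f]; exact norm_inner_le_norm _ _
    by_cases hd0 : (⟪(f:H), V f⟫).re = 0
    · have hWf : ‖WK ⟨(f:H), hd f.2⟩‖ = 0 := by
        have := (hre f).symm.trans hd0
        exact pow_eq_zero_iff (n := 2) (by norm_num) |>.mp this
      have hnum : ‖⟪v, V f⟫‖ = 0 := le_antisymm (by simpa [hWf] using hb) (norm_nonneg _)
      simp [hnum]
    · apply ENNReal.div_le_of_le_mul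
      rw [← ENNReal.ofReal_mul (by positivity)]
      apply ENNReal.ofReal_le_ofReal
      calc ‖⟪v, V f⟫‖^2 ≤ (‖P‖ * ‖WK ⟨(f:H), hd f.2⟩‖)^2 :=
            pow_le_pow_left₀ (norm_nonneg _) hb 2
        _ = ‖P‖^2 * (⟪(f:H), V f⟫).re := by rw [hre f]; ring
  have h2 : ‖k‖^2 ≤ ‖P‖^2 := by
    have h1 := hWK.2.2.2.2 v hv
    rw [← hk] at h1
    have h3 : ENNReal.ofReal (‖k‖^2) ≤ ENNReal.ofReal (‖P‖^2) := h1 ▸ hsup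
    exact (ENNReal.ofReal_le_ofReal_iff (by positivity)).mp h3
  have hpyth : ‖k‖^2 = ‖P‖^2 + ‖k - P‖^2 := by
    have h3 : ⟪P, k - P⟫ = 0 := (Submodule.mem_orthogonal NS _).mp hyP P hPm
    have h4 := @norm_add_sq ℂ _ _ _ _ P (k - P)
    simp only [add_sub_cancel, h3] at h4
    simpa using h4
  have hzero : k - P = 0 := by
    have h5 : ‖k - P‖^2 ≤ 0 := by linarith
    have h6 : ‖k - P‖ = 0 := by nlinarith [norm_nonneg (k - P)]
    exact norm_eq_zero.mp h6
  have hkP : k = P := by linear_combination (norm := module) hzero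
  rw [hrange, ← Submodule.topologicalClosure_coe, hkP]
  exact hPm

lemma st7_key_calc {x w a b X l g u p m : H}
    (H1 : a - b = (2*I) • m)
    (H2 : ⟪x, m⟫ = ((‖g‖^2 : ℝ) : ℂ))
    (H3 : ⟪a, x⟫ = ⟪x, b⟫)
    (H4 : ⟪X, x⟫ = ⟪w, b⟫)
    (H5 : ⟪w, m⟫ = ⟪u, g⟫)
    (H6 : ⟪x, l⟫ = ⟪g, p⟫) :
    (⟪x + w, a + (X + l)⟫).im
      = ‖g‖^2 + (⟪(2:ℂ) • u + (-I) • p, g⟫).re + (⟪w, X + l⟫).im := by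
  have e1 : ⟪x, a⟫ - ⟪x, b⟫ = (2*I) * ((‖g‖^2 : ℝ) : ℂ) := by
    rw [← inner_sub_right, H1, inner_smul_right, H2]
  have e2 : ⟪x, b⟫ = (starRingEnd ℂ) ⟪x, a⟫ := by rw [← H3, inner_conj_symm]
  have e3 : ⟪x, X⟫ = (starRingEnd ℂ) ⟪w, b⟫ := by rw [← H4, inner_conj_symm]
  have e4 : ⟪w, a⟫ - ⟪w, b⟫ = (2*I) * ⟪u, g⟫ := by
    rw [← inner_sub_right, H1, inner_smul_right, H5]
  have e6 : ⟪x, l⟫ = (starRingEnd ℂ) ⟪p, g⟫ := by rw [H6, ← inner_conj_symm]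
  rw [e2] at e1
  simp only [inner_add_left, inner_add_right, e3, e6]
  have c1 := congrArg Complex.im e1
  have c4 := congrArg Complex.im e4
  simp only [inner_smul_left, map_ofNat, map_neg, Complex.conj_I]
  simp only [Complex.sub_im, Complex.add_im, Complex.add_re, Complex.mul_im, Complex.mul_re,
    Complex.conj_im, Complex.conj_re, Complex.I_re, Complex.I_im, Complex.ofReal_re,
    Complex.ofReal_im, Complex.neg_im, Complex.neg_re, neg_mul, neg_neg, neg_zero, Complex.re_ofNat,
    Complex.im_ofNat] at *
  linarith

end St7Aux

/-- **main theorem.** Under the stated assumptions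
(`v ∈ D(V_K^{1/2})` and `L v = V_F^{1/2} φ_v` with `φ_v ∈ D(V_F^{1/2}) ∩ cl(ran V_F^{1/2})`
for all `v ∈ 𝓥`), the extension `A_{𝓥,L}` is dissipative iff
`Im ⟪v, Ã* v + L v⟫ ≥ ¼ ‖U φ_v + 2i V_K^{1/2} v‖²` for all `v ∈ 𝓥`. -/


theorem statement7
    (A At V : H →ₗ.[ℂ] H) (D : Submodule ℂ H)
    (hAdense : Dense (A.domain : Set H)) (hAtdense : Dense (At.domain : Set H))
    (hAclosed : A.IsClosed) (hAtclosed : At.IsClosed)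
    (hdual : A ≤ At.adjoint)
    (hDA : D ≤ A.domain) (hDAt : D ≤ At.domain)
    (hcoreA : (A.domRestrict D).closure = A)
    (hcoreAt : (At.domRestrict D).closure = At)
    (hdiss : Dissipative A)
    (hVdom : V.domain = D)
    (hV : ∀ (x : H) (hxV : x ∈ V.domain) (hxA : x ∈ A.domain) (hxAt : x ∈ At.domain),
      V ⟨x, hxV⟩ = (2 * Complex.I)⁻¹ • (A ⟨x, hxA⟩ - At ⟨x, hxAt⟩))
    (𝓥 : Submodule ℂ H) (h𝓥 : 𝓥 ≤ At.adjoint.domain) (h𝓥A : 𝓥 ⊓ A.domain = ⊥)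
    (L : 𝓥 →ₗ[ℂ] H)
    (WF WK : H →ₗ.[ℂ] H)
    (hWF : IsFriedrichsSqrt V WF) (hWK : IsKreinSqrt V WK)
    (U : H →L[ℂ] H)
    (hU1 : ∀ (h : H) (hF : h ∈ WF.domain) (hK : h ∈ WK.domain),
      U (WF ⟨h, hF⟩) = WK ⟨h, hK⟩)
    (hU2 : ∀ x ∈ closure (Set.range fun g : WF.domain => WF g), ‖U x‖ = ‖x‖)
    (hU3 : ∀ x : H, (∀ g : WF.domain, ⟪WF g, x⟫ = 0) → U x = 0)
    (hvK : ∀ v : 𝓥, (v : H) ∈ WK.domain)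
    (φ : 𝓥 → H)
    (hφdom : ∀ v : 𝓥, φ v ∈ WF.domain)
    (hφran : ∀ v : 𝓥, φ v ∈ closure (Set.range fun g : WF.domain => WF g))
    (hφ : ∀ v : 𝓥, WF ⟨φ v, hφdom v⟩ = L v) :
    (∀ (f : A.domain) (v : 𝓥) (hfv : (f : H) + (v : H) ∈ At.adjoint.domain),
      0 ≤ (⟪(f : H) + (v : H), At.adjoint ⟨(f : H) + (v : H), hfv⟩ + L v⟫).im) ↔
      ∀ (v : 𝓥) (hv : (v : H) ∈ At.adjoint.domain),
        (1 / 4) * ‖U (φ v) + (2 * Complex.I) • WK ⟨(v : H), hvK v⟩‖ ^ 2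
          ≤ (⟪(v : H), At.adjoint ⟨(v : H), hv⟩ + L v⟫).im := by
  classical
  have hDA' : V.domain ≤ A.domain := fun x hx => hDA (hVdom ▸ hx)
  have hDAt' : V.domain ≤ At.domain := fun x hx => hDAt (hVdom ▸ hx)
  have hDWF : V.domain ≤ WF.domain := st7_sqrt_dom hWF.2.2.1
  have hDWK : V.domain ≤ WK.domain := st7_sqrt_dom hWK.2.2.1
  have hWFsym := st7_selfadj_symm hWF.1
  have faAt := LinearPMap.adjoint_isFormalAdjoint hAtdense
  set gF : V.domain → H := fun f => WF ⟨(f:H), hDWF f.2⟩ with hgF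
  set kv : 𝓥 → H := fun v => WK ⟨(v:H), hvK v⟩ with hkv
  set Ustar := ContinuousLinearMap.adjoint U with hUstardef
  set cv : 𝓥 → H := fun v => (2:ℂ) • Ustar (kv v) + (-I) • φ v with hcv
  -- the closed subspace M = cl ran WF
  set MS := (LinearMap.range WF.toFun).topologicalClosure with hMSdef
  have hMSclosed : IsClosed (MS : Set H) := Submodule.isClosed_topologicalClosure _
  have hMS : (MS : Set H) = closure (Set.range fun g : WF.domain => WF g) := by
    rw [hMSdef, Submodule.topologicalClosure_coe, LinearMap.coe_range]; rfl
  have hU2' : ∀ x ∈ MS, ‖U x‖ = ‖x‖ := fun x hx => hU2 x (by rw [← hMS]; exact hx)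
  have hU3' : ∀ x ∈ MSᗮ, U x = 0 := by
    intro x hx
    exact hU3 x fun g => (Submodule.mem_orthogonal MS x).mp hx _
      (Submodule.le_topologicalClosure _ ⟨g, rfl⟩)
  have hUstarU := st7_UstarU U MS hMSclosed hU2' hU3'
  have hUstarMem := st7_Ustar_mem U MS hMSclosed hU3'
  have hgFMS : ∀ f : V.domain, gF f ∈ MS :=
    fun f => Submodule.le_topologicalClosure _ ⟨_, rfl⟩
  have hUgF : ∀ f : V.domain, U (gF f) = WK ⟨(f:H), hDWK f.2⟩ :=
    fun f => hU1 _ _ _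
  have hUUkv : ∀ v : 𝓥, U (Ustar (kv v)) = kv v := by
    intro v
    have hclosed : IsClosed {y : H | U (Ustar y) = y} :=
      isClosed_eq (U.continuous.comp Ustar.continuous) continuous_id
    have hsub : (Set.range fun f : V.domain => WK ⟨(f:H), hDWK f.2⟩) ⊆
        {y : H | U (Ustar y) = y} := by
      rintro _ ⟨f, rfl⟩
      show U (Ustar (WK ⟨(f:H), hDWK f.2⟩)) = _
      rw [← hUgF f, hUstarU _ (hgFMS f)]
      exact hUgF f
    exact closure_minimal hsub hclosed (st7_krein_mem hWK hDWK _ (hvK v))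
  have hφMS : ∀ v : 𝓥, φ v ∈ MS := by
    intro v
    have h0 := hφran v
    rw [← hMS] at h0
    exact h0
  have hcMS : ∀ v : 𝓥, cv v ∈ MS :=
    fun v => MS.add_mem (MS.smul_mem _ (hUstarMem _)) (MS.smul_mem _ (hφMS v))
  have hnormc : ∀ v : 𝓥, ‖cv v‖ = ‖U (φ v) + (2*I) • kv v‖ := by
    intro v
    have h1 : ‖cv v‖ = ‖U (cv v)‖ := (hU2' _ (hcMS v)).symm
    have h2 : U (cv v) = (2:ℂ) • kv v + (-I) • U (φ v) := by
      rw [hcv]; simp only [map_add, map_smul]; rw [hUUkv]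
    have hII : I * (-I) = 1 := by rw [mul_neg, Complex.I_mul_I, neg_neg]
    have h3 : I • U (cv v) = U (φ v) + (2*I) • kv v := by
      rw [h2, smul_add, smul_smul, smul_smul, hII, one_smul, mul_comm I 2]
      exact add_comm _ _
    rw [h1, ← h3, norm_smul]
    simp
  -- the key pointwise identity on the common core
  have key : ∀ (v : 𝓥) (f : V.domain),
      (⟪(f:H) + (v:H), A ⟨(f:H), hDA' f.2⟩ + (At.adjoint ⟨(v:H), h𝓥 v.2⟩ + L v)⟫).im
        = ‖gF f‖^2 + (⟪cv v, gF f⟫).re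
          + (⟪(v:H), At.adjoint ⟨(v:H), h𝓥 v.2⟩ + L v⟫).im := by
    intro v f
    have hfW : (f:H) ∈ WF.domain := hDWF f.2
    refine st7_key_calc (b := At ⟨(f:H), hDAt' f.2⟩) (m := V f) ?_ ?_ ?_ ?_ ?_ ?_
    · -- H1
      have h0 : V f = (2*I)⁻¹ • (A ⟨(f:H), hDA' f.2⟩ - At ⟨(f:H), hDAt' f.2⟩) :=
        hV (f:H) f.2 (hDA' f.2) (hDAt' f.2)
      rw [h0, smul_smul, mul_inv_cancel₀ (by simp : (2*I:ℂ) ≠ 0), one_smul]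
    · -- H2
      have h1 : ⟪(f:H), V f⟫ = ⟪gF f, gF f⟫ :=
        st7_sqrt_inner hWF.1 hWF.2.2.1 f hfW ⟨(f:H), hfW⟩
      rw [h1, inner_self_eq_norm_sq_to_K]
      norm_cast
    · -- H3
      have h2 : A ⟨(f:H), hDA' f.2⟩ = At.adjoint ⟨(f:H), hdual.1 (hDA' f.2)⟩ := hdual.2 rfl
      rw [h2]
      exact faAt ⟨(f:H), hdual.1 (hDA' f.2)⟩ ⟨(f:H), hDAt' f.2⟩
    · -- H4
      exact faAt ⟨(v:H), h𝓥 v.2⟩ ⟨(f:H), hDAt' f.2⟩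
    · -- H5
      have h1 : ⟪(v:H), V f⟫ = ⟪kv v, WK ⟨(f:H), hDWK f.2⟩⟫ :=
        st7_sqrt_inner hWK.1 hWK.2.2.1 f (hDWK f.2) ⟨(v:H), hvK v⟩
      rw [h1, ← hUgF f]
      exact (ContinuousLinearMap.adjoint_inner_left U (gF f) (kv v)).symm
    · -- H6
      rw [← hφ v]
      exact (hWFsym ⟨(f:H), hfW⟩ ⟨φ v, hφdom v⟩).symm
  -- decomposition of the extension
  have decomp : ∀ (f : A.domain) (v : 𝓥) (hfv : (f:H) + (v:H) ∈ At.adjoint.domain),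
      At.adjoint ⟨(f:H) + (v:H), hfv⟩ + L v
        = A f + (At.adjoint ⟨(v:H), h𝓥 v.2⟩ + L v) := by
    intro f v hfv
    have h1 : (⟨(f:H) + (v:H), hfv⟩ : At.adjoint.domain)
        = ⟨(f:H), hdual.1 f.2⟩ + ⟨(v:H), h𝓥 v.2⟩ := rfl
    have h2 : A f = At.adjoint ⟨(f:H), hdual.1 f.2⟩ := hdual.2 rfl
    rw [h1, LinearPMap.map_add, h2]
    abel
  constructor
  · intro hL v hv
    have hq : ∀ f : V.domain,
        0 ≤ ‖gF f‖^2 + (⟪cv v, gF f⟫).re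
          + (⟪(v:H), At.adjoint ⟨(v:H), h𝓥 v.2⟩ + L v⟫).im := by
      intro f
      have hfv' : (f:H) + (v:H) ∈ At.adjoint.domain :=
        At.adjoint.domain.add_mem (hdual.1 (hDA' f.2)) (h𝓥 v.2)
      have h0 := hL ⟨(f:H), hDA' f.2⟩ v hfv'
      rw [decomp ⟨(f:H), hDA' f.2⟩ v hfv'] at h0
      have h1 : 0 ≤ (⟪(f:H) + (v:H),
          A ⟨(f:H), hDA' f.2⟩ + (At.adjoint ⟨(v:H), h𝓥 v.2⟩ + L v)⟫).im := h0
      rw [key v f] at h1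
      exact h1
    have hC : IsClosed {g : H | 0 ≤ ‖g‖^2 + (⟪cv v, g⟫).re
        + (⟪(v:H), At.adjoint ⟨(v:H), h𝓥 v.2⟩ + L v⟫).im} := by
      apply isClosed_le continuous_const
      refine Continuous.add (Continuous.add ?_ ?_) continuous_const
      · exact continuous_norm.pow 2
      · exact Complex.continuous_re.comp (Continuous.inner continuous_const continuous_id)
    have hsub : (Set.range fun y : (WF.domRestrict V.domain).domain =>
        (WF.domRestrict V.domain) y) ⊆ {g : H | 0 ≤ ‖g‖^2 + (⟪cv v, g⟫).re
          + (⟪(v:H), At.adjoint ⟨(v:H), h𝓥 v.2⟩ + L v⟫).im} := by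
      rintro _ ⟨y, rfl⟩
      have hy1 : (y:H) ∈ V.domain := (Submodule.mem_inf.mp y.2).1
      have heq : (WF.domRestrict V.domain) y = gF ⟨(y:H), hy1⟩ :=
        LinearPMap.domRestrict_apply rfl
      show 0 ≤ ‖(WF.domRestrict V.domain) y‖^2 + (⟪cv v, (WF.domRestrict V.domain) y⟫).re
          + (⟪(v:H), At.adjoint ⟨(v:H), h𝓥 v.2⟩ + L v⟫).im
      rw [heq]
      exact hq ⟨(y:H), hy1⟩
    have hMSsub : (MS : Set H) ⊆ closure (Set.range fun y :
        (WF.domRestrict V.domain).domain => (WF.domRestrict V.domain) y) := by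
      rw [hMS]
      apply closure_minimal _ isClosed_closure
      rintro _ ⟨g, rfl⟩
      exact st7_apply_mem_closure_range_of_core hWF.2.2.2 g
    set RS := (LinearMap.range (WF.domRestrict V.domain).toFun).topologicalClosure with hRS
    have hRScoe : (RS : Set H) = closure (Set.range fun y :
        (WF.domRestrict V.domain).domain => (WF.domRestrict V.domain) y) := by
      rw [hRS, Submodule.topologicalClosure_coe, LinearMap.coe_range]; rfl
    have hcRS : cv v ∈ RS := by
      have h2 := hMSsub (hcMS v)
      rwa [← hRScoe] at h2
    have hmem : ((-(1/2) : ℂ) • cv v) ∈ closure (Set.range fun y :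
        (WF.domRestrict V.domain).domain => (WF.domRestrict V.domain) y) := by
      rw [← hRScoe]
      exact RS.smul_mem _ hcRS
    have hfin : 0 ≤ ‖((-(1/2):ℂ)) • cv v‖^2 + (⟪cv v, ((-(1/2):ℂ)) • cv v⟫).re
        + (⟪(v:H), At.adjoint ⟨(v:H), h𝓥 v.2⟩ + L v⟫).im :=
      closure_minimal hsub hC hmem
    have hhalfc : ((-(1/2):ℂ)) = ((-(1/2):ℝ):ℂ) := by norm_num
    have e1 : ‖((-(1/2):ℂ)) • cv v‖ = (1/2) * ‖cv v‖ := by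
      rw [norm_smul, hhalfc, Complex.norm_real]
      norm_num
    have e2 : (⟪cv v, ((-(1/2):ℂ)) • cv v⟫).re = -(1/2) * ‖cv v‖^2 := by
      rw [inner_smul_right]
      have e3 : ⟪cv v, cv v⟫ = ((‖cv v‖^2 : ℝ) : ℂ) := by
        rw [@inner_self_eq_norm_sq_to_K ℂ]
        simp [← Complex.ofReal_pow]
      rw [e3, hhalfc, ← Complex.ofReal_mul, Complex.ofReal_re]
    rw [e1, e2] at hfin
    show (1/4) * ‖U (φ v) + (2*I) • kv v‖^2
      ≤ (⟪(v:H), At.adjoint ⟨(v:H), h𝓥 v.2⟩ + L v⟫).im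
    rw [← hnormc v]
    nlinarith [hfin]
  · intro hR f v hfv
    rw [decomp f v hfv]
    have hJ : (1/4) * ‖cv v‖^2
        ≤ (⟪(v:H), At.adjoint ⟨(v:H), h𝓥 v.2⟩ + L v⟫).im := by
      have h0 := hR v (h𝓥 v.2)
      rw [hnormc v]
      exact h0
    have hq : ∀ f' : V.domain,
        0 ≤ (⟪(f':H) + (v:H),
          A ⟨(f':H), hDA' f'.2⟩ + (At.adjoint ⟨(v:H), h𝓥 v.2⟩ + L v)⟫).im := by
      intro f'
      rw [key v f']
      have habs : |(⟪cv v, gF f'⟫).re| ≤ ‖cv v‖ * ‖gF f'‖ := by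
        calc |(⟪cv v, gF f'⟫).re| ≤ ‖⟪cv v, gF f'⟫‖ := Complex.abs_re_le_norm _
          _ ≤ ‖cv v‖ * ‖gF f'‖ := norm_inner_le_norm _ _
      have h1 := abs_le.mp habs
      nlinarith [sq_nonneg (‖gF f'‖ - ‖cv v‖/2), hJ, h1.1]
    have hC2 : IsClosed {q : H × H | 0 ≤ (⟪q.1 + (v:H),
        q.2 + (At.adjoint ⟨(v:H), h𝓥 v.2⟩ + L v)⟫).im} := by
      apply isClosed_le continuous_const
      exact Complex.continuous_im.comp (Continuous.inner
        (continuous_fst.add continuous_const) (continuous_snd.add continuous_const))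
    have hsub2 : ((A.domRestrict D).graph : Set (H×H)) ⊆ {q : H × H |
        0 ≤ (⟪q.1 + (v:H), q.2 + (At.adjoint ⟨(v:H), h𝓥 v.2⟩ + L v)⟫).im} := by
      intro q hq2
      rcases (A.domRestrict D).mem_graph_iff'.mp hq2 with ⟨y, rfl⟩
      have hy1 : (y:H) ∈ V.domain := by
        rw [hVdom]
        exact (Submodule.mem_inf.mp y.2).1
      have heq : (A.domRestrict D) y = A ⟨(y:H), hDA' hy1⟩ :=
        LinearPMap.domRestrict_apply rfl
      show 0 ≤ (⟪(y:H) + (v:H),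
          (A.domRestrict D) y + (At.adjoint ⟨(v:H), h𝓥 v.2⟩ + L v)⟫).im
      rw [heq]
      exact hq ⟨(y:H), hy1⟩
    exact closure_minimal hsub2 hC2 (st7_mem_closure_graph_of_core hcoreA f)
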